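/- Suppose 0 < b < 1, 0 < e < 1, r ∈ [0,1], p, q ≥ 0 with p + q ≤ 1, and δ > 0. Then for every (x,y) ∈ [0,1]² the color-swap symmetry holds: F_{1−r, p, q, e, b, δ}(1−x, 1−y) = (1 − F¹_{r,p,q,b,e,δ}(x,y), 1 − F²_{r,p,q,b,e,δ}(x,y)), where F¹ and F² denote the two components of the map F and the subscripts indicate the parameters with which F is computed. -/

import Mathlib

noncomputable def sVal (p q δ : ℝ) : ℝ := (p + q) * δ

noncomputable def aR (r p q δ t : ℝ) : ℝ := t + r * sVal p q δ

noncomputable def aB (r p q δ t : ℝ) : ℝ := 1 - t + (1 - r) * sVal p q δ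

noncomputable def P1RR (r p q b e δ x : ℝ) : ℝ :=
  e * aR r p q δ x / (1 + sVal p q δ - b * aB r p q δ x - (1 - e) * aR r p q δ x)

noncomputable def P1RB (r p q b e δ x : ℝ) : ℝ :=
  (1 - b) * aB r p q δ x / (1 + sVal p q δ - b * aB r p q δ x - (1 - e) * aR r p q δ x)

noncomputable def P1BR (r p q b e δ x : ℝ) : ℝ :=
  (1 - e) * aR r p q δ x / (1 + sVal p q δ - e * aR r p q δ x - (1 - b) * aB r p q δ x)

noncomputable def P1BB (r p q b e δ x : ℝ) : ℝ :=
  b * aB r p q δ x / (1 + sVal p q δ - e * aR r p q δ x - (1 - b) * aB r p q δ x)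

noncomputable def P2RR (r p q b e δ y : ℝ) : ℝ :=
  e * aR r p q δ y / (1 + sVal p q δ - e * aB r p q δ y - (1 - e) * aR r p q δ y)

noncomputable def P2RB (r p q b e δ y : ℝ) : ℝ :=
  (1 - e) * aB r p q δ y / (1 + sVal p q δ - e * aB r p q δ y - (1 - e) * aR r p q δ y)

noncomputable def P2BR (r p q b e δ y : ℝ) : ℝ :=
  (1 - b) * aR r p q δ y / (1 + sVal p q δ - b * aR r p q δ y - (1 - b) * aB r p q δ y)

noncomputable def P2BB (r p q b e δ y : ℝ) : ℝ :=
  b * aB r p q δ y / (1 + sVal p q δ - b * aR r p q δ y - (1 - b) * aB r p q δ y)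

noncomputable def D3 (r p q b e δ x y : ℝ) : ℝ :=
  (1 + sVal p q δ) ^ 2 - b * aR r p q δ y * aB r p q δ x - e * aR r p q δ x * aB r p q δ y
    - (1 - b) * aB r p q δ x * aB r p q δ y - (1 - e) * aR r p q δ x * aR r p q δ y

noncomputable def P3RR (r p q b e δ x y : ℝ) : ℝ :=
  e * aR r p q δ y * aR r p q δ x / D3 r p q b e δ x y

noncomputable def P3BR (r p q b e δ x y : ℝ) : ℝ :=
  (1 - e) * aB r p q δ y * aR r p q δ x / D3 r p q b e δ x y

noncomputable def P3RB (r p q b e δ x y : ℝ) : ℝ :=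
  (1 - b) * aR r p q δ y * aB r p q δ x / D3 r p q b e δ x y

noncomputable def P3BB (r p q b e δ x y : ℝ) : ℝ :=
  b * aB r p q δ y * aB r p q δ x / D3 r p q b e δ x y

noncomputable def F (r p q b e δ : ℝ) (θ : ℝ × ℝ) : ℝ × ℝ :=
  (p * (r * P1RR r p q b e δ θ.1 + (1 - r) * P1BR r p q b e δ θ.1) + q * r
      + (1 - p - q) * (P3RR r p q b e δ θ.1 θ.2 + P3BR r p q b e δ θ.1 θ.2),
   p * r + q * (r * P2RR r p q b e δ θ.2 + (1 - r) * P2BR r p q b e δ θ.2)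
      + (1 - p - q) * (P3RR r p q b e δ θ.1 θ.2 + P3RB r p q b e δ θ.1 θ.2))

noncomputable def Ci (r p q b e δ x y : ℝ) : ℝ :=
  p * r * e / (1 + sVal p q δ - b * aB r p q δ x - (1 - e) * aR r p q δ x)
    + p * (1 - r) * (1 - e) / (1 + sVal p q δ - e * aR r p q δ x - (1 - b) * aB r p q δ x)
    + (1 - p - q) * (e * aR r p q δ y + (1 - e) * aB r p q δ y) / D3 r p q b e δ x y

noncomputable def Co (r p q b e δ x y : ℝ) : ℝ :=
  q * r * e / (1 + sVal p q δ - e * aB r p q δ y - (1 - e) * aR r p q δ y)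
    + q * (1 - r) * (1 - b) / (1 + sVal p q δ - b * aR r p q δ y - (1 - b) * aB r p q δ y)
    + (1 - p - q) * (e * aR r p q δ x + (1 - b) * aB r p q δ x) / D3 r p q b e δ x y

noncomputable def CiB (r p q b e δ x y : ℝ) : ℝ := Ci (1 - r) p q e b δ (1 - x) (1 - y)

noncomputable def CoB (r p q b e δ x y : ℝ) : ℝ := Co (1 - r) p q e b δ (1 - x) (1 - y)

lemma aR_swap (r p q δ t : ℝ) : aR (1 - r) p q δ (1 - t) = aB r p q δ t := by
  unfold aR aB; ring

lemma aB_swap (r p q δ t : ℝ) : aB (1 - r) p q δ (1 - t) = aR r p q δ t := by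
  unfold aR aB; ring

lemma P1RR_swap (r p q b e δ x : ℝ) :
    P1RR (1 - r) p q e b δ (1 - x) = P1BB r p q b e δ x := by
  unfold P1RR P1BB; rw [aR_swap, aB_swap]

lemma P1BR_swap (r p q b e δ x : ℝ) :
    P1BR (1 - r) p q e b δ (1 - x) = P1RB r p q b e δ x := by
  unfold P1BR P1RB; rw [aR_swap, aB_swap]

lemma P2RR_swap (r p q b e δ y : ℝ) :
    P2RR (1 - r) p q e b δ (1 - y) = P2BB r p q b e δ y := by
  unfold P2RR P2BB; rw [aR_swap, aB_swap]

lemma P2BR_swap (r p q b e δ y : ℝ) :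
    P2BR (1 - r) p q e b δ (1 - y) = P2RB r p q b e δ y := by
  unfold P2BR P2RB; rw [aR_swap, aB_swap]

lemma D3_swap (r p q b e δ x y : ℝ) :
    D3 (1 - r) p q e b δ (1 - x) (1 - y) = D3 r p q b e δ x y := by
  unfold D3; rw [aR_swap, aR_swap, aB_swap, aB_swap]; ring

lemma P3RR_swap (r p q b e δ x y : ℝ) :
    P3RR (1 - r) p q e b δ (1 - x) (1 - y) = P3BB r p q b e δ x y := by
  unfold P3RR P3BB; rw [aR_swap, aR_swap, D3_swap]

lemma P3BR_swap (r p q b e δ x y : ℝ) :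
    P3BR (1 - r) p q e b δ (1 - x) (1 - y) = P3RB r p q b e δ x y := by
  unfold P3BR P3RB; rw [aR_swap, aB_swap, D3_swap]

lemma P3RB_swap (r p q b e δ x y : ℝ) :
    P3RB (1 - r) p q e b δ (1 - x) (1 - y) = P3BR r p q b e δ x y := by
  unfold P3RB P3BR; rw [aR_swap, aB_swap, D3_swap]

set_option maxHeartbeats 1600000 in
/-- Color-swap symmetry of the DMPA mean-field map: relabeling the two colors
(swapping `r` with `1 - r` and the homophily parameters `b` and `e`) exchanges the
roles of the two groups. -/
theorem F_color_swap (r p q b e δ : ℝ)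
    (hb0 : 0 < b) (hb1 : b < 1) (he0 : 0 < e) (he1 : e < 1)
    (hr0 : 0 ≤ r) (hr1 : r ≤ 1) (hp : 0 ≤ p) (hq : 0 ≤ q) (hpq : p + q ≤ 1)
    (hδ : 0 < δ) :
    ∀ x ∈ Set.Icc (0 : ℝ) 1, ∀ y ∈ Set.Icc (0 : ℝ) 1,
      F (1 - r) p q e b δ (1 - x, 1 - y) =
        (1 - (F r p q b e δ (x, y)).1, 1 - (F r p q b e δ (x, y)).2) := by
  intro x hx y hy
  obtain ⟨hx0, hx1⟩ := hx
  obtain ⟨hy0, hy1⟩ := hy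
  have he1' : (0:ℝ) < 1 - e := by linarith
  have hb1' : (0:ℝ) < 1 - b := by linarith
  have hs : 0 ≤ sVal p q δ := mul_nonneg (by linarith) hδ.le
  have harx : 0 ≤ aR r p q δ x := add_nonneg hx0 (mul_nonneg hr0 hs)
  have hary : 0 ≤ aR r p q δ y := add_nonneg hy0 (mul_nonneg hr0 hs)
  have habx : 0 ≤ aB r p q δ x :=
    add_nonneg (by linarith) (mul_nonneg (by linarith) hs)
  have haby : 0 ≤ aB r p q δ y :=
    add_nonneg (by linarith) (mul_nonneg (by linarith) hs)
  have hsumx : aR r p q δ x + aB r p q δ x = 1 + sVal p q δ := by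
    unfold aR aB; ring
  have hsumy : aR r p q δ y + aB r p q δ y = 1 + sVal p q δ := by
    unfold aR aB; ring
  -- positivity of D3
  have hD3 : 0 < D3 r p q b e δ x y := by
    have hD3eq : D3 r p q b e δ x y =
        e * (aR r p q δ x * aR r p q δ y) + (1 - e) * (aR r p q δ x * aB r p q δ y)
          + (1 - b) * (aB r p q δ x * aR r p q δ y)
          + b * (aB r p q δ x * aB r p q δ y) := by
      unfold D3 aR aB sVal; ring
    rw [hD3eq]
    have hxalt : 0 < aR r p q δ x ∨ 0 < aB r p q δ x := by
      rcases lt_or_ge 0 (aR r p q δ x) with h | h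
      · exact Or.inl h
      · right; linarith
    have hyalt : 0 < aR r p q δ y ∨ 0 < aB r p q δ y := by
      rcases lt_or_ge 0 (aR r p q δ y) with h | h
      · exact Or.inl h
      · right; linarith
    rcases hxalt with hax | hax <;> rcases hyalt with hay | hay
    · nlinarith [mul_pos he0 (mul_pos hax hay), mul_nonneg he1'.le (mul_nonneg harx haby),
        mul_nonneg hb1'.le (mul_nonneg habx hary), mul_nonneg hb0.le (mul_nonneg habx haby)]
    · nlinarith [mul_pos he1' (mul_pos hax hay), mul_nonneg he0.le (mul_nonneg harx hary),
        mul_nonneg hb1'.le (mul_nonneg habx hary), mul_nonneg hb0.le (mul_nonneg habx haby)]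
    · nlinarith [mul_pos hb1' (mul_pos hax hay), mul_nonneg he0.le (mul_nonneg harx hary),
        mul_nonneg he1'.le (mul_nonneg harx haby), mul_nonneg hb0.le (mul_nonneg habx haby)]
    · nlinarith [mul_pos hb0 (mul_pos hax hay), mul_nonneg he0.le (mul_nonneg harx hary),
        mul_nonneg he1'.le (mul_nonneg harx haby), mul_nonneg hb1'.le (mul_nonneg habx hary)]
  have hP3sum : P3RR r p q b e δ x y + P3BR r p q b e δ x y + P3RB r p q b e δ x y
      + P3BB r p q b e δ x y = 1 := by
    unfold P3RR P3BR P3RB P3BB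
    rw [← add_div, ← add_div, ← add_div,
      div_eq_one_iff_eq hD3.ne']
    unfold D3 aR aB sVal; ring
  -- conditional sum-to-one identities for the growth events 1 and 2
  have hA : p * (P1RR r p q b e δ x + P1RB r p q b e δ x) = p := by
    rcases eq_or_lt_of_le hp with h | h
    · rw [← h]; ring
    · have hspos : 0 < sVal p q δ := mul_pos (by linarith) hδ
      have hkey : 0 < e * r + (1 - b) * (1 - r) := by
        nlinarith [mul_pos he0 hb1', mul_nonneg (mul_nonneg he0.le hb0.le) hr0,
          mul_nonneg (mul_nonneg he1'.le hb1'.le) (by linarith : (0:ℝ) ≤ 1 - r)]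
      have hd : 0 < 1 + sVal p q δ - b * aB r p q δ x - (1 - e) * aR r p q δ x := by
        have heq : 1 + sVal p q δ - b * aB r p q δ x - (1 - e) * aR r p q δ x
            = e * x + (1 - b) * (1 - x) + (e * r + (1 - b) * (1 - r)) * sVal p q δ := by
          unfold aR aB; ring
        rw [heq]
        nlinarith [mul_pos hkey hspos, mul_nonneg he0.le hx0,
          mul_nonneg hb1'.le (by linarith : (0:ℝ) ≤ 1 - x)]
      have hsum : P1RR r p q b e δ x + P1RB r p q b e δ x = 1 := by
        unfold P1RR P1RB
        rw [← add_div, div_eq_one_iff_eq hd.ne']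
        unfold aR aB sVal; ring
      rw [hsum]; ring
  have hB : p * (P1BR r p q b e δ x + P1BB r p q b e δ x) = p := by
    rcases eq_or_lt_of_le hp with h | h
    · rw [← h]; ring
    · have hspos : 0 < sVal p q δ := mul_pos (by linarith) hδ
      have hkey : 0 < (1 - e) * r + b * (1 - r) := by
        nlinarith [mul_pos he1' hb0, mul_nonneg (mul_nonneg he1'.le hb1'.le) hr0,
          mul_nonneg (mul_nonneg he0.le hb0.le) (by linarith : (0:ℝ) ≤ 1 - r)]
      have hd : 0 < 1 + sVal p q δ - e * aR r p q δ x - (1 - b) * aB r p q δ x := by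
        have heq : 1 + sVal p q δ - e * aR r p q δ x - (1 - b) * aB r p q δ x
            = (1 - e) * x + b * (1 - x) + ((1 - e) * r + b * (1 - r)) * sVal p q δ := by
          unfold aR aB; ring
        rw [heq]
        nlinarith [mul_pos hkey hspos, mul_nonneg he1'.le hx0,
          mul_nonneg hb0.le (by linarith : (0:ℝ) ≤ 1 - x)]
      have hsum : P1BR r p q b e δ x + P1BB r p q b e δ x = 1 := by
        unfold P1BR P1BB
        rw [← add_div, div_eq_one_iff_eq hd.ne']
        unfold aR aB sVal; ring
      rw [hsum]; ring
  have hC : q * (P2RR r p q b e δ y + P2RB r p q b e δ y) = q := by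
    rcases eq_or_lt_of_le hq with h | h
    · rw [← h]; ring
    · have hspos : 0 < sVal p q δ := mul_pos (by linarith) hδ
      have hkey : 0 < e * r + (1 - e) * (1 - r) := by
        nlinarith [mul_pos he0 he1', mul_nonneg (mul_nonneg he0.le he0.le) hr0,
          mul_nonneg (mul_nonneg he1'.le he1'.le) (by linarith : (0:ℝ) ≤ 1 - r)]
      have hd : 0 < 1 + sVal p q δ - e * aB r p q δ y - (1 - e) * aR r p q δ y := by
        have heq : 1 + sVal p q δ - e * aB r p q δ y - (1 - e) * aR r p q δ y
            = e * y + (1 - e) * (1 - y) + (e * r + (1 - e) * (1 - r)) * sVal p q δ := by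
          unfold aR aB; ring
        rw [heq]
        nlinarith [mul_pos hkey hspos, mul_nonneg he0.le hy0,
          mul_nonneg he1'.le (by linarith : (0:ℝ) ≤ 1 - y)]
      have hsum : P2RR r p q b e δ y + P2RB r p q b e δ y = 1 := by
        unfold P2RR P2RB
        rw [← add_div, div_eq_one_iff_eq hd.ne']
        unfold aR aB sVal; ring
      rw [hsum]; ring
  have hD : q * (P2BR r p q b e δ y + P2BB r p q b e δ y) = q := by
    rcases eq_or_lt_of_le hq with h | h
    · rw [← h]; ring
    · have hspos : 0 < sVal p q δ := mul_pos (by linarith) hδ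
      have hkey : 0 < (1 - b) * r + b * (1 - r) := by
        nlinarith [mul_pos hb0 hb1', mul_nonneg (mul_nonneg hb1'.le hb1'.le) hr0,
          mul_nonneg (mul_nonneg hb0.le hb0.le) (by linarith : (0:ℝ) ≤ 1 - r)]
      have hd : 0 < 1 + sVal p q δ - b * aR r p q δ y - (1 - b) * aB r p q δ y := by
        have heq : 1 + sVal p q δ - b * aR r p q δ y - (1 - b) * aB r p q δ y
            = (1 - b) * y + b * (1 - y) + ((1 - b) * r + b * (1 - r)) * sVal p q δ := by
          unfold aR aB; ring
        rw [heq]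
        nlinarith [mul_pos hkey hspos, mul_nonneg hb1'.le hy0,
          mul_nonneg hb0.le (by linarith : (0:ℝ) ≤ 1 - y)]
      have hsum : P2BR r p q b e δ y + P2BB r p q b e δ y = 1 := by
        unfold P2BR P2BB
        rw [← add_div, div_eq_one_iff_eq hd.ne']
        unfold aR aB sVal; ring
      rw [hsum]; ring
  simp only [F, Prod.mk.injEq]
  rw [P1RR_swap, P1BR_swap, P2RR_swap, P2BR_swap, P3RR_swap, P3BR_swap, P3RB_swap]
  constructor
  · linear_combination r * hA + (1 - r) * hB + (1 - p - q) * hP3sum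
  · linear_combination r * hC + (1 - r) * hD + (1 - p - q) * hP3sum
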